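/- Let (g, c) be a finite connected directed multigraph with a weight c: E → ℤ, let e be an edge of g, and let (g′, c′) be the graph obtained from g by inserting a new vertex v′ of degree 2 into the edge e (subdividing e into two consecutive edges e_1 pointing into v′ and e_2 pointing out of v′, each carrying weight c(e)), with c′ agreeing with c on all other edges. Then for every vertex r of g, N(g′, c′, r) = c(e) · N(g, c, r). -/

import Mathlib

/-- A finite directed multigraph on vertex type `V` with edge type `E`. -/
structure Multidigraph (V E : Type) where
  src : E → V
  tgt : E → V

/-- `T` is an oriented spanning tree of `G` rooted at `r`: every vertex `v ≠ r`
has in-degree 1 in `T`, the root `r` has in-degree 0 in `T`, and `T` contains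
no oriented cycle. -/
def IsOrientedSpanningTree {V E : Type} [Fintype E] [DecidableEq V]
    (G : Multidigraph V E) (r : V) (T : Finset E) : Prop :=
  (∀ v : V, v ≠ r → (T.filter (fun e => G.tgt e = v)).card = 1) ∧
  (T.filter (fun e => G.tgt e = r)).card = 0 ∧
  ¬ ∃ l : List E, l ≠ [] ∧ (∀ e ∈ l, e ∈ T) ∧
      l.Chain' (fun e f => G.tgt e = G.src f) ∧
      ∀ e₁ ∈ l.head?, ∀ e₂ ∈ l.getLast?, G.tgt e₂ = G.src e₁

open Classical in
/-- The weighted number `N(Γ, w, r)` of oriented spanning trees rooted at `r`. -/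
noncomputable def treeCount {V E : Type} [Fintype E] [DecidableEq V]
    (G : Multidigraph V E) (w : E → ℤ) (r : V) : ℤ :=
  ∑ T : Finset E, if IsOrientedSpanningTree G r T then ∏ e ∈ T, w e else 0


/-- Undirected connectivity of the underlying undirected graph. -/
def MConnected {V E : Type} (G : Multidigraph V E) : Prop :=
  ∀ u v : V, Relation.ReflTransGen
    (fun x y => ∃ e : E, (G.src e = x ∧ G.tgt e = y) ∨ (G.src e = y ∧ G.tgt e = x)) u v

/-- The graph obtained from `G` by inserting a new vertex `v'` (encoded `Sum.inr ()`)
of degree 2 into the edge `e₀`, subdividing it into `e₁ = Sum.inl e₀` (pointing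
from the source of `e₀` into `v'`) and `e₂ = Sum.inr ()` (pointing out of `v'`
to the target of `e₀`); all other edges are unchanged. -/
def subdivide {V E : Type} [DecidableEq E] (G : Multidigraph V E) (e₀ : E) :
    Multidigraph (V ⊕ Unit) (E ⊕ Unit) where
  src := fun e => match e with
    | Sum.inl e => Sum.inl (G.src e)
    | Sum.inr _ => Sum.inr ()
  tgt := fun e => match e with
    | Sum.inl e => if e = e₀ then Sum.inr () else Sum.inl (G.tgt e)
    | Sum.inr _ => Sum.inl (G.tgt e₀)

set_option linter.unusedSectionVars false

section Aux

variable {V E : Type}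

/-- The step relation on vertices induced by the edges in `T`. -/
def edgeRel (G : Multidigraph V E) (T : Finset E) : V → V → Prop :=
  fun x y => ∃ e ∈ T, G.src e = x ∧ G.tgt e = y

/-- The cycle condition, as in `IsOrientedSpanningTree`. -/
def HasCycleList (G : Multidigraph V E) (T : Finset E) : Prop :=
  ∃ l : List E, l ≠ [] ∧ (∀ e ∈ l, e ∈ T) ∧
      l.Chain' (fun e f => G.tgt e = G.src f) ∧
      ∀ e₁ ∈ l.head?, ∀ e₂ ∈ l.getLast?, G.tgt e₂ = G.src e₁

lemma chain_transGen (G : Multidigraph V E) (T : Finset E) :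
    ∀ (l : List E) (e : E), (∀ x ∈ e :: l, x ∈ T) →
      (e :: l).Chain' (fun a b => G.tgt a = G.src b) →
      Relation.TransGen (edgeRel G T) (G.src e)
        (G.tgt ((e :: l).getLast (List.cons_ne_nil _ _))) := by
  intro l
  induction l with
  | nil => intro e hm _; exact Relation.TransGen.single ⟨e, hm e (by simp), rfl, rfl⟩
  | cons f l ih =>
    intro e hm hc
    rw [List.Chain', List.isChain_cons_cons] at hc
    have h1 : Relation.TransGen (edgeRel G T) (G.src f)
        (G.tgt ((f :: l).getLast (List.cons_ne_nil _ _))) :=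
      ih f (fun x hx => hm x (by simp at hx ⊢; tauto)) hc.2
    have h0 : edgeRel G T (G.src e) (G.src f) :=
      ⟨e, hm e (by simp), rfl, hc.1⟩
    have : (e :: f :: l).getLast (List.cons_ne_nil _ _)
        = (f :: l).getLast (List.cons_ne_nil _ _) := List.getLast_cons _
    rw [this]
    exact Relation.TransGen.head h0 h1

lemma transGen_chain (G : Multidigraph V E) (T : Finset E) {a b : V}
    (h : Relation.TransGen (edgeRel G T) a b) :
    ∃ (l : List E) (e₁ e₂ : E), l.head? = some e₁ ∧ l.getLast? = some e₂ ∧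
      (∀ x ∈ l, x ∈ T) ∧ l.Chain' (fun p q => G.tgt p = G.src q) ∧
      G.src e₁ = a ∧ G.tgt e₂ = b := by
  induction h with
  | single h =>
    obtain ⟨e, heT, hs, ht⟩ := h
    exact ⟨[e], e, e, rfl, rfl, by simpa using heT, List.isChain_singleton _, hs, ht⟩
  | tail _ h ih =>
    obtain ⟨l, e₁, e₂, hh, hl, hT, hch, hs, ht⟩ := ih
    obtain ⟨e, heT, hes, het⟩ := h
    refine ⟨l ++ [e], e₁, e, ?_, ?_, ?_, ?_, hs, het⟩
    · rcases l with _ | ⟨x, l⟩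
      · simp at hh
      · simpa using hh
    · simp
    · intro x hx; rcases List.mem_append.mp hx with h | h
      · exact hT x h
      · simp at h; subst h; exact heT
    · rw [List.Chain', List.isChain_append]
      refine ⟨hch, by simp, ?_⟩
      intro x hx y hy
      simp at hy; subst hy
      rw [hl] at hx; simp at hx; subst hx
      rw [ht, hes]

lemma hasCycleList_iff (G : Multidigraph V E) (T : Finset E) :
    HasCycleList G T ↔ ∃ v, Relation.TransGen (edgeRel G T) v v := by
  constructor
  · rintro ⟨l, hne, hT, hch, hcl⟩
    rcases l with _ | ⟨e, l⟩
    · exact absurd rfl hne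
    have := chain_transGen G T l e hT hch
    have hcl' : G.tgt ((e :: l).getLast (List.cons_ne_nil _ _)) = G.src e := by
      apply hcl e (by simp)
      simp [List.getLast?_eq_getLast]
    rw [hcl'] at this
    exact ⟨G.src e, this⟩
  · rintro ⟨v, h⟩
    obtain ⟨l, e₁, e₂, hh, hl, hT, hch, hs, ht⟩ := transGen_chain G T h
    refine ⟨l, ?_, hT, hch, ?_⟩
    · rintro rfl; simp at hh
    · intro f₁ hf₁ f₂ hf₂
      rw [hh] at hf₁; rw [hl] at hf₂
      simp at hf₁ hf₂; subst hf₁; subst hf₂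
      rw [ht, hs]

end Aux

section Sub

variable {V E : Type} [DecidableEq V] [DecidableEq E]

/-- The spanning tree of the subdivided graph corresponding to `T`. -/
def subT (e₀ : E) (T : Finset E) : Finset (E ⊕ Unit) :=
  insert (Sum.inl e₀) (T.image fun e => if e = e₀ then Sum.inr () else Sum.inl e)

lemma ite_inj (e₀ : E) : Function.Injective
    (fun e : E => if e = e₀ then (Sum.inr () : E ⊕ Unit) else Sum.inl e) := by
  intro a b hab
  by_cases ha : a = e₀ <;> by_cases hb : b = e₀ <;> simp [ha, hb] at hab <;> simp [ha, hb, hab]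

lemma mem_subT_inl {e₀ e : E} {T : Finset E} :
    Sum.inl e ∈ subT e₀ T ↔ (e = e₀ ∨ (e ∈ T ∧ e ≠ e₀)) := by
  unfold subT
  simp only [Finset.mem_insert, Finset.mem_image]
  constructor
  · rintro (h | ⟨a, haT, ha⟩)
    · left; simpa using h
    · by_cases hae : a = e₀ <;> simp [hae] at ha
      right; exact ⟨ha ▸ haT, ha ▸ hae⟩
  · rintro (rfl | ⟨heT, hne⟩)
    · left; rfl
    · right; exact ⟨e, heT, by simp [hne]⟩

lemma mem_subT_inr {e₀ : E} {T : Finset E} {u : Unit} :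
    Sum.inr u ∈ subT e₀ T ↔ e₀ ∈ T := by
  unfold subT
  simp only [Finset.mem_insert, Finset.mem_image]
  constructor
  · rintro (h | ⟨a, haT, ha⟩)
    · simp at h
    · by_cases hae : a = e₀ <;> simp [hae] at ha
      exact hae ▸ haT
  · intro h; right; exact ⟨e₀, h, by simp⟩

lemma filter_subT_tgt (G : Multidigraph V E) (e₀ : E) (T : Finset E) (v : V) :
    ((subT e₀ T).filter (fun e' => (subdivide G e₀).tgt e' = Sum.inl v)) =
      (T.filter (fun e => G.tgt e = v)).image
        (fun e => if e = e₀ then Sum.inr () else Sum.inl e) := by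
  ext x
  simp only [Finset.mem_filter, Finset.mem_image]
  constructor
  · rintro ⟨hx, htgt⟩
    cases x with
    | inl e =>
      by_cases he : e = e₀
      · subst he; simp [subdivide] at htgt
      · simp [subdivide, he] at htgt
        rcases mem_subT_inl.mp hx with h | ⟨heT, _⟩
        · exact absurd h he
        · exact ⟨e, ⟨heT, htgt⟩, by simp [he]⟩
    | inr u =>
      simp [subdivide] at htgt
      exact ⟨e₀, ⟨mem_subT_inr.mp hx, htgt⟩, by simp⟩
  · rintro ⟨e, he, rfl⟩
    by_cases heq : e = e₀
    · subst heq
      simp only [if_pos rfl]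
      exact ⟨mem_subT_inr.mpr he.1, by simp [subdivide, he.2]⟩
    · simp only [if_neg heq]
      exact ⟨mem_subT_inl.mpr (Or.inr ⟨he.1, heq⟩), by simp [subdivide, heq, he.2]⟩

lemma card_filter_subT (G : Multidigraph V E) (e₀ : E) (T : Finset E) (v : V) :
    ((subT e₀ T).filter (fun e' => (subdivide G e₀).tgt e' = Sum.inl v)).card =
      (T.filter (fun e => G.tgt e = v)).card := by
  rw [filter_subT_tgt, Finset.card_image_of_injective _ (ite_inj e₀)]

lemma inl_mem_subT (e₀ : E) (T : Finset E) : Sum.inl e₀ ∈ subT e₀ T :=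
  mem_subT_inl.mpr (Or.inl rfl)

lemma filter_subT_inr (G : Multidigraph V E) (e₀ : E) (T : Finset E) :
    ((subT e₀ T).filter (fun e' => (subdivide G e₀).tgt e' = Sum.inr ())) = {Sum.inl e₀} := by
  ext x
  simp only [Finset.mem_filter, Finset.mem_singleton]
  constructor
  · rintro ⟨hx, htgt⟩
    cases x with
    | inl e =>
      by_cases he : e = e₀
      · simp [he]
      · simp [subdivide, he] at htgt
    | inr u => simp [subdivide] at htgt
  · rintro rfl
    exact ⟨inl_mem_subT e₀ T, by simp [subdivide]⟩

lemma prod_subT (e₀ : E) (T : Finset E) (c : E → ℤ) :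
    (∏ e' ∈ subT e₀ T, (Sum.elim c (fun _ => c e₀) e')) = c e₀ * ∏ e ∈ T, c e := by
  unfold subT
  rw [Finset.prod_insert, Finset.prod_image]
  · congr 1
    apply Finset.prod_congr rfl
    intro a _
    by_cases ha : a = e₀ <;> simp [ha]
  · intro a _ b _ hab; exact ite_inj e₀ hab
  · intro h
    obtain ⟨a, _, ha⟩ := Finset.mem_image.mp h
    by_cases hae : a = e₀ <;> simp [hae] at ha

end Sub

section Cyc

variable {V E : Type} [DecidableEq V] [DecidableEq E]
variable (G : Multidigraph V E) (e₀ : E) (T : Finset E)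

/-- Projection of the subdivided vertices back to `V`. -/
def ppv (G : Multidigraph V E) (e₀ : E) : V ⊕ Unit → V :=
  Sum.elim id (fun _ => G.tgt e₀)

lemma up_step {x y : V} (h : edgeRel G T x y) :
    Relation.TransGen (edgeRel (subdivide G e₀) (subT e₀ T)) (Sum.inl x) (Sum.inl y) := by
  obtain ⟨e, heT, rfl, rfl⟩ := h
  by_cases he : e = e₀
  · refine Relation.TransGen.tail (b := Sum.inr ()) (Relation.TransGen.single ?_) ?_
    · exact ⟨Sum.inl e₀, inl_mem_subT e₀ T, by simp [subdivide, he], by simp [subdivide]⟩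
    · exact ⟨Sum.inr (), mem_subT_inr.mpr (he ▸ heT), rfl, by simp [subdivide, he]⟩
  · exact Relation.TransGen.single
      ⟨Sum.inl e, mem_subT_inl.mpr (Or.inr ⟨heT, he⟩), rfl, by simp [subdivide, he]⟩

lemma up_transGen {x y : V} (h : Relation.TransGen (edgeRel G T) x y) :
    Relation.TransGen (edgeRel (subdivide G e₀) (subT e₀ T)) (Sum.inl x) (Sum.inl y) := by
  induction h with
  | single h => exact up_step G e₀ T h
  | tail _ h ih => exact ih.trans (up_step G e₀ T h)

lemma down_step_mem (hT : e₀ ∈ T) {x y : V ⊕ Unit}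
    (h : edgeRel (subdivide G e₀) (subT e₀ T) x y) :
    Relation.TransGen (edgeRel G T) (ppv G e₀ x) (ppv G e₀ y) ∨
      (x = Sum.inr () ∧ y = Sum.inl (G.tgt e₀)) := by
  obtain ⟨e', he', hs, ht⟩ := h
  cases e' with
  | inl e =>
    by_cases he : e = e₀
    · left
      simp [subdivide, he] at hs ht
      rw [← hs, ← ht]
      exact Relation.TransGen.single ⟨e₀, hT, by simp [ppv], by simp [ppv]⟩
    · left
      have heT : e ∈ T := by
        rcases mem_subT_inl.mp he' with h | h
        · exact absurd h he
        · exact h.1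
      simp [subdivide, he] at hs ht
      rw [← hs, ← ht]
      exact Relation.TransGen.single ⟨e, heT, by simp [ppv], by simp [ppv]⟩
  | inr u =>
    right
    simp [subdivide] at hs ht
    exact ⟨hs.symm, ht.symm⟩

lemma down_transGen_mem (hT : e₀ ∈ T) {a b : V ⊕ Unit}
    (h : Relation.TransGen (edgeRel (subdivide G e₀) (subT e₀ T)) a b) :
    Relation.TransGen (edgeRel G T) (ppv G e₀ a) (ppv G e₀ b) ∨
      (a = Sum.inr () ∧ b = Sum.inl (G.tgt e₀)) := by
  induction h with
  | single h => exact down_step_mem G e₀ T hT h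
  | @tail b c _ h ih =>
    rcases down_step_mem G e₀ T hT h with hl | ⟨rfl, rfl⟩
    · rcases ih with ihl | ⟨rfl, rfl⟩
      · exact Or.inl (ihl.trans hl)
      · left
        simpa [ppv] using hl
    · rcases ih with ihl | ⟨rfl, hb⟩
      · left; simpa [ppv] using ihl
      · simp at hb

lemma no_step_from_inr (hT : e₀ ∉ T) {c : V ⊕ Unit}
    (h : edgeRel (subdivide G e₀) (subT e₀ T) (Sum.inr ()) c) : False := by
  obtain ⟨e', he', hs, _⟩ := h
  cases e' with
  | inl e => simp [subdivide] at hs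
  | inr u => exact hT (mem_subT_inr.mp he')

lemma down_step_notmem (hT : e₀ ∉ T) {x y : V ⊕ Unit}
    (h : edgeRel (subdivide G e₀) (subT e₀ T) x y) :
    Relation.TransGen (edgeRel G T) (ppv G e₀ x) (ppv G e₀ y) ∨ y = Sum.inr () := by
  obtain ⟨e', he', hs, ht⟩ := h
  cases e' with
  | inl e =>
    by_cases he : e = e₀
    · right; simp [subdivide, he] at ht; exact ht.symm
    · left
      have heT : e ∈ T := by
        rcases mem_subT_inl.mp he' with h | h
        · exact absurd h he
        · exact h.1
      simp [subdivide, he] at hs ht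
      rw [← hs, ← ht]
      exact Relation.TransGen.single ⟨e, heT, by simp [ppv], by simp [ppv]⟩
  | inr u => exact absurd (mem_subT_inr.mp he') hT

lemma down_transGen_notmem (hT : e₀ ∉ T) {a b : V ⊕ Unit}
    (h : Relation.TransGen (edgeRel (subdivide G e₀) (subT e₀ T)) a b) :
    Relation.TransGen (edgeRel G T) (ppv G e₀ a) (ppv G e₀ b) ∨ b = Sum.inr () := by
  induction h with
  | single h => exact down_step_notmem G e₀ T hT h
  | @tail b c _ h ih =>
    rcases ih with ihl | rfl
    · rcases down_step_notmem G e₀ T hT h with hl | hr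
      · exact Or.inl (ihl.trans hl)
      · exact Or.inr hr
    · exact absurd h (fun hh => no_step_from_inr G e₀ T hT hh)

lemma hasCycle_subT_iff :
    HasCycleList (subdivide G e₀) (subT e₀ T) ↔ HasCycleList G T := by
  rw [hasCycleList_iff, hasCycleList_iff]
  constructor
  · rintro ⟨v', h⟩
    by_cases hT : e₀ ∈ T
    · rcases down_transGen_mem G e₀ T hT h with hl | ⟨h1, h2⟩
      · exact ⟨_, hl⟩
      · rw [h1] at h2; simp at h2
    · rcases down_transGen_notmem G e₀ T hT h with hl | rfl
      · exact ⟨_, hl⟩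
      · obtain ⟨c, h0, -⟩ := Relation.TransGen.head'_iff.mp h
        exact absurd h0 (fun hh => no_step_from_inr G e₀ T hT hh)
  · rintro ⟨v, h⟩
    exact ⟨Sum.inl v, up_transGen G e₀ T h⟩

end Cyc

section Main

variable {V E : Type} [Fintype E] [DecidableEq V] [DecidableEq E]

/-- The inverse map: recover a tree of `G` from a tree of the subdivision. -/
def backT (e₀ : E) (T' : Finset (E ⊕ Unit)) : Finset E :=
  Finset.univ.filter (fun e => if e = e₀ then Sum.inr () ∈ T' else Sum.inl e ∈ T')

lemma backT_subT (e₀ : E) (T : Finset E) : backT e₀ (subT e₀ T) = T := by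
  ext e
  simp only [backT, Finset.mem_filter, Finset.mem_univ, true_and]
  by_cases he : e = e₀
  · subst he; simp [mem_subT_inr]
  · simp only [if_neg he, mem_subT_inl]
    constructor
    · rintro (h | h)
      · exact absurd h he
      · exact h.1
    · intro h; exact Or.inr ⟨h, he⟩

lemma subT_backT {e₀ : E} {T' : Finset (E ⊕ Unit)} (h : Sum.inl e₀ ∈ T') :
    subT e₀ (backT e₀ T') = T' := by
  ext x
  cases x with
  | inl e =>
    rw [mem_subT_inl]
    simp only [backT, Finset.mem_filter, Finset.mem_univ, true_and]
    by_cases he : e = e₀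
    · subst he; simp [h]
    · simp [he]
  | inr u =>
    cases u
    rw [mem_subT_inr]
    simp [backT]

lemma tgt_eq_inr_iff (G : Multidigraph V E) (e₀ : E) (e' : E ⊕ Unit) :
    (subdivide G e₀).tgt e' = Sum.inr () ↔ e' = Sum.inl e₀ := by
  cases e' with
  | inl e => by_cases he : e = e₀ <;> simp [subdivide, he]
  | inr u => simp [subdivide]

lemma isOST_subT_iff (G : Multidigraph V E) (e₀ : E) (r : V) (T : Finset E) :
    IsOrientedSpanningTree (subdivide G e₀) (Sum.inl r) (subT e₀ T) ↔
      IsOrientedSpanningTree G r T := by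
  constructor
  · rintro ⟨hdeg, hroot, hcyc⟩
    refine ⟨?_, ?_, ?_⟩
    · intro v hv
      have := hdeg (Sum.inl v) (by simpa using hv)
      rwa [card_filter_subT] at this
    · have := hroot
      rwa [card_filter_subT] at this
    · intro hc
      exact hcyc ((hasCycle_subT_iff G e₀ T).mpr hc)
  · rintro ⟨hdeg, hroot, hcyc⟩
    refine ⟨?_, ?_, ?_⟩
    · intro v' hv'
      cases v' with
      | inl v =>
        rw [card_filter_subT]
        exact hdeg v (by simpa using hv')
      | inr u =>
        cases u
        rw [filter_subT_inr]
        simp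
    · rw [card_filter_subT]; exact hroot
    · intro hc
      exact hcyc ((hasCycle_subT_iff G e₀ T).mp hc)

lemma inl_mem_of_isOST (G : Multidigraph V E) (e₀ : E) (r : V) (T' : Finset (E ⊕ Unit))
    (h : IsOrientedSpanningTree (subdivide G e₀) (Sum.inl r) T') : Sum.inl e₀ ∈ T' := by
  have h1 := h.1 (Sum.inr ()) (by simp)
  have h2 : T'.filter (fun e' => (subdivide G e₀).tgt e' = Sum.inr ()) =
      T'.filter (fun e' => e' = Sum.inl e₀) := by
    apply Finset.filter_congr
    intro x _
    simp [tgt_eq_inr_iff]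
  rw [h2, Finset.filter_eq'] at h1
  by_cases hmem : Sum.inl e₀ ∈ T'
  · exact hmem
  · rw [if_neg hmem] at h1; simp at h1

end Main

/-- Inserting a degree-2 vertex into an edge `e₀` of a finite connected directed
multigraph `(g, c)` (both new edges carrying the weight `c e₀`) multiplies the
weighted number of oriented spanning trees rooted at any vertex `r` by `c e₀`. -/
theorem treeCount_subdivide {V E : Type} [Fintype V] [Fintype E] [DecidableEq V] [DecidableEq E]
    (G : Multidigraph V E) (c : E → ℤ) (e₀ : E)
    (hconn : MConnected G) (r : V) :
    treeCount (subdivide G e₀)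
        (fun e => match e with
          | Sum.inl e => c e
          | Sum.inr _ => c e₀)
        (Sum.inl r)
      = c e₀ * treeCount G c r := by
  classical
  have hw : (fun e : E ⊕ Unit => match e with
      | Sum.inl e => c e
      | Sum.inr _ => c e₀) = Sum.elim c (fun _ => c e₀) := by
    funext x; cases x <;> rfl
  unfold treeCount
  rw [hw, ← Finset.sum_filter, ← Finset.sum_filter, Finset.mul_sum]
  refine Finset.sum_nbij' (backT e₀) (subT e₀) ?_ ?_ ?_ ?_ ?_
  · intro T' hT'
    rw [Finset.mem_filter] at hT' ⊢
    refine ⟨Finset.mem_univ _, ?_⟩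
    have hmem := inl_mem_of_isOST G e₀ r T' hT'.2
    rw [← isOST_subT_iff G e₀ r, subT_backT hmem]
    exact hT'.2
  · intro T hT
    rw [Finset.mem_filter] at hT ⊢
    exact ⟨Finset.mem_univ _, (isOST_subT_iff G e₀ r T).mpr hT.2⟩
  · intro T' hT'
    rw [Finset.mem_filter] at hT'
    exact subT_backT (inl_mem_of_isOST G e₀ r T' hT'.2)
  · intro T _
    exact backT_subT e₀ T
  · intro T' hT'
    rw [Finset.mem_filter] at hT'
    conv_lhs => rw [← subT_backT (inl_mem_of_isOST G e₀ r T' hT'.2)]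
    rw [prod_subT]
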